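/- Let H be a Hilbert space with orthonormal basis (φ_j)_{j∈ℤ}, let R be the operator with R φ_j = (1 − δ_{j,0}) φ_j, and let T be the self-adjoint operator with matrix entries ⟨T φ_j, φ_k⟩ = ½δ_{j,k} + ¼(δ_{j-k,2} + δ_{j-k,-2}) − ¼(δ_{j,1}+δ_{j,-1})(δ_{k,1}+δ_{k,-1}). Then R + T ≥ κ I with κ = (3 − √5)/2. -/

import Mathlib

open Finset Complex

namespace LMC

noncomputable def K : ℝ := (3 - Real.sqrt 5) / 2

lemma s5sq : Real.sqrt 5 ^ 2 = 5 := Real.sq_sqrt (by norm_num)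
lemma s5gt : 2 < Real.sqrt 5 := by nlinarith [s5sq, Real.sqrt_nonneg 5]
lemma s5lt : Real.sqrt 5 < 3 := by nlinarith [s5sq, Real.sqrt_nonneg 5]
lemma K_lt : K < 1/2 := by unfold K; nlinarith [s5gt]
lemma K_pos : 0 < K := by unfold K; nlinarith [s5lt]

lemma quadA (s t : ℝ) : 0 ≤ (1/4 - K/2)*s^2 - (1/2)*s*t + (5/4 - K/2)*t^2 := by
  have h1 := s5sq
  have h2 := s5gt
  unfold K
  nlinarith [sq_nonneg ((Real.sqrt 5 - 2)*s - t), sq_nonneg s, sq_nonneg t]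

lemma reCM (u v : ℂ) : ((starRingEnd ℂ) u * v).re = u.re*v.re + u.im*v.im := by
  simp [Complex.mul_re]

lemma reCM_comm (u v : ℂ) : ((starRingEnd ℂ) u * v).re = ((starRingEnd ℂ) v * u).re := by
  simp [reCM]; ring

lemma reSelf (u : ℂ) : ((starRingEnd ℂ) u * u).re = ‖u‖^2 := by
  rw [mul_comm, Complex.mul_conj, Complex.ofReal_re, Complex.normSq_eq_norm_sq]

lemma re_ge (u v : ℂ) : -(‖u‖*‖v‖) ≤ ((starRingEnd ℂ) u * v).re := by
  have h := Complex.abs_re_le_norm ((starRingEnd ℂ) u * v)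
  have : ‖(starRingEnd ℂ) u * v‖ = ‖u‖ * ‖v‖ := by
    simp
  rw [this] at h
  linarith [neg_abs_le ((starRingEnd ℂ) u * v).re, abs_nonneg (((starRingEnd ℂ) u * v).re)]

lemma normaddsq (u v : ℂ) : ‖u+v‖^2 = ‖u‖^2 + ‖v‖^2 + 2*((starRingEnd ℂ) u * v).re := by
  have h := Complex.normSq_add u v
  have e : ∀ z : ℂ, Complex.normSq z = ‖z‖^2 := by
    intro z; simp [Complex.normSq_eq_norm_sq]
  rw [e, e, e] at h
  rw [h]; congr 1
  rw [reCM_comm]; simp [reCM]; ring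

lemma chain3 (d : ℕ → ℂ) (m : ℕ) :
    K/2*‖d 0‖^2 + (1/4 - K/2)*‖d m‖^2 ≤
      1/4*‖d 0‖^2 + ∑ n ∈ Finset.range m,
        ((3/2 - K)*‖d (n+1)‖^2 + 1/2*((starRingEnd ℂ) (d n) * d (n+1)).re) := by
  induction m with
  | zero => simp; linarith
  | succ m ih =>
      rw [Finset.sum_range_succ]
      have h1 := re_ge (d m) (d (m+1))
      have h2 := quadA ‖d m‖ ‖d (m+1)‖
      linarith

lemma oddchain (d : ℕ → ℂ) (m : ℕ) :
    1/4*‖d 0‖^2 ≤ 1/4*‖d m‖^2 + ∑ n ∈ Finset.range m,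
        ((3/2 - K)*‖d n‖^2 + 1/2*((starRingEnd ℂ) (d n) * d (n+1)).re) := by
  induction m with
  | zero => simp
  | succ m ih =>
      rw [Finset.sum_range_succ]
      have h1 := re_ge (d m) (d (m+1))
      have h2 := sq_nonneg (‖d m‖ - ‖d (m+1)‖)
      have h3 := sq_nonneg ‖d m‖
      have h4 := K_lt
      nlinarith

lemma sumIcc (f : ℤ → ℝ) (M : ℕ) :
    ∑ j ∈ Finset.Icc (-(M:ℤ)) (M:ℤ), f j
      = f 0 + ∑ n ∈ Finset.range M, (f ((n:ℤ)+1) + f (-(n:ℤ)-1)) := by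
  induction M with
  | zero => simp
  | succ M ih =>
      have hset : Finset.Icc (-((M:ℤ)+1)) ((M:ℤ)+1)
          = insert (-((M:ℤ)+1)) (insert ((M:ℤ)+1) (Finset.Icc (-(M:ℤ)) (M:ℤ))) := by
        ext j; simp only [Finset.mem_Icc, Finset.mem_insert]; omega
      push_cast
      rw [hset, Finset.sum_insert, Finset.sum_insert, ih, Finset.sum_range_succ]
      · rw [show -((M:ℤ)+1) = -(M:ℤ)-1 by ring]; linarith
      · simp only [Finset.mem_Icc]; omega
      · simp only [Finset.mem_insert, Finset.mem_Icc]; omega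

lemma eosplit (g : ℕ → ℝ) (M : ℕ) :
    ∑ n ∈ Finset.range (2*M), g n = ∑ k ∈ Finset.range M, (g (2*k) + g (2*k+1)) := by
  induction M with
  | zero => simp
  | succ M ih =>
      rw [Nat.mul_succ, Finset.sum_range_succ, Finset.sum_range_succ,
        Finset.sum_range_succ, ih]
      ring

lemma shiftsum (f : ℕ → ℝ) (M : ℕ) :
    ∑ k ∈ Finset.range M, f (k+1) = ∑ k ∈ Finset.range M, f k + f M - f 0 := by
  have h1 := Finset.sum_range_succ' f M
  have h2 := Finset.sum_range_succ f M
  linarith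

lemma sum_zero_congr {f : ℤ → ℝ} {F G : Finset ℤ}
    (h1 : ∀ j ∈ F, j ∉ G → f j = 0) (h2 : ∀ j ∈ G, j ∉ F → f j = 0) :
    ∑ j ∈ F, f j = ∑ j ∈ G, f j := by
  have hF : ∑ j ∈ F, f j = ∑ j ∈ F ∪ G, f j :=
    Finset.sum_subset Finset.subset_union_left
      (fun x hx hnx => h2 x ((Finset.mem_union.mp hx).resolve_left hnx) hnx)
  have hG : ∑ j ∈ G, f j = ∑ j ∈ F ∪ G, f j :=
    Finset.sum_subset Finset.subset_union_right
      (fun x hx hnx => h1 x ((Finset.mem_union.mp hx).resolve_right hnx) hnx)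
  rw [hF, hG]


lemma core (a : ℤ → ℂ) (N : ℕ) (hN : 1 ≤ N)
    (h : ∀ j : ℤ, j ∉ Finset.Icc (-(N:ℤ)) (N:ℤ) → a j = 0) :
    K * ∑ j ∈ Finset.Icc (-(N:ℤ)) (N:ℤ), ‖a j‖^2
      ≤ (∑ j ∈ Finset.Icc (-(N:ℤ)) (N:ℤ), if j = 0 then (0:ℝ) else ‖a j‖^2)
        + ((1/2) * ∑ j ∈ Finset.Icc (-(N:ℤ)) (N:ℤ), ‖a j‖^2
          + (1/4) * ∑ j ∈ Finset.Icc (-(N:ℤ)) (N:ℤ), ((starRingEnd ℂ) (a j) * a (j-2)).re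
          + (1/4) * ∑ j ∈ Finset.Icc (-(N:ℤ)) (N:ℤ), ((starRingEnd ℂ) (a j) * a (j+2)).re
          - (1/4) * ‖a 1 + a (-1)‖^2) := by
  classical
  set u : ℕ → ℝ := fun n => ‖a (n:ℤ)‖^2 with hu_def
  set v : ℕ → ℝ := fun n => ‖a (-(n:ℤ))‖^2 with hv_def
  set p : ℕ → ℝ := fun n => ((starRingEnd ℂ) (a (n:ℤ)) * a ((n:ℤ)+2)).re with hp_def
  set q : ℕ → ℝ := fun n => ((starRingEnd ℂ) (a (-(n:ℤ))) * a (-(n:ℤ)+2)).re with hq_def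
  set r : ℤ → ℝ := fun j => ((starRingEnd ℂ) (a j) * a (j+2)).re with hr_def
  set M : ℕ := N + 1 with hM_def
  have ha : ∀ j : ℤ, (N:ℤ) < j → a j = 0 := fun j hj => h j (by simp [Finset.mem_Icc]; omega)
  have ha' : ∀ j : ℤ, j < -(N:ℤ) → a j = 0 := fun j hj => h j (by simp [Finset.mem_Icc]; omega)
  have hu0 : ∀ m : ℕ, N < m → u m = 0 := by
    intro m hm; simp only [hu_def]; rw [ha m (by exact_mod_cast hm)]; simp
  have hv0 : ∀ m : ℕ, N < m → v m = 0 := by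
    intro m hm; simp only [hv_def]; rw [ha' (-(m:ℤ)) (by omega)]; simp
  have hp0 : ∀ m : ℕ, N < m → p m = 0 := by
    intro m hm; simp only [hp_def]; rw [ha m (by exact_mod_cast hm)]; simp
  have hq0 : ∀ m : ℕ, N < m → q m = 0 := by
    intro m hm; simp only [hq_def]; rw [ha' (-(m:ℤ)) (by omega)]; simp
  -- the (j-2) cross sum equals the (j+2) cross sum
  have hterm : ∀ j : ℤ, ((starRingEnd ℂ) (a j) * a (j-2)).re = r (j-2) := by
    intro j
    simp only [hr_def]
    rw [show j-2+2 = j by ring, reCM_comm]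
  have hminus : ∑ j ∈ Finset.Icc (-(N:ℤ)) (N:ℤ), ((starRingEnd ℂ) (a j) * a (j-2)).re
      = ∑ j ∈ Finset.Icc (-(N:ℤ)) (N:ℤ), r j := by
    rw [Finset.sum_congr rfl (fun j _ => hterm j)]
    have hmap : ∑ j ∈ Finset.Icc (-(N:ℤ) + -2) ((N:ℤ) + -2), r j
        = ∑ j ∈ Finset.Icc (-(N:ℤ)) (N:ℤ), r (j - 2) := by
      rw [← Finset.map_add_right_Icc (-(N:ℤ)) (N:ℤ) (-2), Finset.sum_map]
      apply Finset.sum_congr rfl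
      intro j _
      simp [addRightEmbedding, sub_eq_add_neg]
    rw [← hmap]
    apply sum_zero_congr
    · intro j hj hnj
      simp only [Finset.mem_Icc] at hj hnj
      have hz : a j = 0 := ha' j (by omega)
      simp [hr_def, hz]
    · intro j hj hnj
      simp only [Finset.mem_Icc] at hj hnj
      have hz : a (j+2) = 0 := ha (j+2) (by omega)
      simp [hr_def, hz]
  -- convert Icc sums to range sums of u,v,p,q
  have hS : ∑ j ∈ Finset.Icc (-(N:ℤ)) (N:ℤ), ‖a j‖^2
      = u 0 + ∑ n ∈ Finset.range N, (u (n+1) + v (n+1)) := by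
    rw [sumIcc (fun j => ‖a j‖^2) N]
    have e : ∀ n ∈ Finset.range N, ‖a ((n:ℤ)+1)‖^2 + ‖a (-(n:ℤ)-1)‖^2 = u (n+1) + v (n+1) := by
      intro n _; simp only [hu_def, hv_def]; push_cast; ring_nf
    have e0 : u 0 = ‖a 0‖^2 := by simp only [hu_def]; norm_num
    rw [Finset.sum_congr rfl e, e0]
  have hRR : (∑ j ∈ Finset.Icc (-(N:ℤ)) (N:ℤ), if j = 0 then (0:ℝ) else ‖a j‖^2)
      = ∑ n ∈ Finset.range N, (u (n+1) + v (n+1)) := by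
    rw [sumIcc (fun j => if j = 0 then (0:ℝ) else ‖a j‖^2) N]
    have e : ∀ n ∈ Finset.range N, ((if ((n:ℤ)+1) = 0 then (0:ℝ) else ‖a ((n:ℤ)+1)‖^2)
        + (if (-(n:ℤ)-1) = 0 then (0:ℝ) else ‖a (-(n:ℤ)-1)‖^2)) = u (n+1) + v (n+1) := by
      intro n _
      rw [if_neg (by omega), if_neg (by omega)]
      simp only [hu_def, hv_def]; push_cast; ring_nf
    rw [Finset.sum_congr rfl e, if_pos rfl, zero_add]
  have hCr : ∑ j ∈ Finset.Icc (-(N:ℤ)) (N:ℤ), r j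
      = p 0 + ∑ n ∈ Finset.range N, (p (n+1) + q (n+1)) := by
    rw [sumIcc r N]
    have e : ∀ n ∈ Finset.range N, r ((n:ℤ)+1) + r (-(n:ℤ)-1) = p (n+1) + q (n+1) := by
      intro n _; simp only [hr_def, hp_def, hq_def]; push_cast; ring_nf
    have e0 : r 0 = p 0 := by simp only [hr_def, hp_def]; norm_num
    rw [Finset.sum_congr rfl e, e0]
  -- extend range N to range (2*M)
  have hext1 : ∑ n ∈ Finset.range N, (u (n+1) + v (n+1))
      = ∑ n ∈ Finset.range (2*M), (u (n+1) + v (n+1)) := by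
    apply Finset.sum_subset (by rw [Finset.range_subset_range]; omega)
    intro x _ hx
    rw [Finset.mem_range, not_lt] at hx
    rw [hu0 (x+1) (by omega), hv0 (x+1) (by omega)]; ring
  have hext2 : ∑ n ∈ Finset.range N, (p (n+1) + q (n+1))
      = ∑ n ∈ Finset.range (2*M), (p (n+1) + q (n+1)) := by
    apply Finset.sum_subset (by rw [Finset.range_subset_range]; omega)
    intro x _ hx
    rw [Finset.mem_range, not_lt] at hx
    rw [hp0 (x+1) (by omega), hq0 (x+1) (by omega)]; ring
  -- even/odd split
  have hsplit1 : ∑ n ∈ Finset.range (2*M), (u (n+1) + v (n+1))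
      = ∑ k ∈ Finset.range M, u (2*k+1) + ∑ k ∈ Finset.range M, v (2*k+1)
        + ∑ k ∈ Finset.range M, u (2*k+2) + ∑ k ∈ Finset.range M, v (2*k+2) := by
    rw [eosplit (fun n => u (n+1) + v (n+1)) M]
    have e : ∀ k ∈ Finset.range M,
        (u (2*k+1) + v (2*k+1)) + (u (2*k+1+1) + v (2*k+1+1))
        = (u (2*k+1) + v (2*k+1)) + (u (2*k+2) + v (2*k+2)) := fun k _ => rfl
    rw [Finset.sum_congr rfl e, Finset.sum_add_distrib, Finset.sum_add_distrib,
      Finset.sum_add_distrib]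
    ring
  have hsplit2 : ∑ n ∈ Finset.range (2*M), (p (n+1) + q (n+1))
      = ∑ k ∈ Finset.range M, p (2*k+1) + ∑ k ∈ Finset.range M, q (2*k+1)
        + ∑ k ∈ Finset.range M, p (2*k+2) + ∑ k ∈ Finset.range M, q (2*k+2) := by
    rw [eosplit (fun n => p (n+1) + q (n+1)) M]
    have e : ∀ k ∈ Finset.range M,
        (p (2*k+1) + q (2*k+1)) + (p (2*k+1+1) + q (2*k+1+1))
        = (p (2*k+1) + q (2*k+1)) + (p (2*k+2) + q (2*k+2)) := fun k _ => rfl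
    rw [Finset.sum_congr rfl e, Finset.sum_add_distrib, Finset.sum_add_distrib,
      Finset.sum_add_distrib]
    ring
  -- the four chains
  have hcR : K/2*u 0 + (1/4-K/2)*u (2*M) ≤ 1/4*u 0
      + ((3/2-K) * ∑ k ∈ Finset.range M, u (2*k+2) + 1/2 * ∑ k ∈ Finset.range M, p (2*k)) := by
    have hch := chain3 (fun n => a ((2*n : ℕ):ℤ)) M
    have e : ∑ n ∈ Finset.range M, ((3/2-K)*‖a ((2*(n+1):ℕ):ℤ)‖^2
          + 1/2*((starRingEnd ℂ) (a ((2*n:ℕ):ℤ)) * a ((2*(n+1):ℕ):ℤ)).re)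
        = ∑ n ∈ Finset.range M, ((3/2-K)*u (2*n+2) + 1/2*p (2*n)) := by
      apply Finset.sum_congr rfl; intro n _
      simp only [hu_def, hp_def]; push_cast; ring_nf
    rw [e, Finset.sum_add_distrib, ← Finset.mul_sum, ← Finset.mul_sum] at hch
    have e0 : ‖a ((2*0:ℕ):ℤ)‖^2 = u 0 := rfl
    have eM : ‖a ((2*M:ℕ):ℤ)‖^2 = u (2*M) := rfl
    rw [e0, eM] at hch
    exact hch
  have hcL : K/2*v 0 + (1/4-K/2)*v (2*M) ≤ 1/4*v 0
      + ((3/2-K) * ∑ k ∈ Finset.range M, v (2*k+2) + 1/2 * ∑ k ∈ Finset.range M, q (2*k+2)) := by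
    have hch := chain3 (fun n => a (-((2*n : ℕ):ℤ))) M
    have e : ∑ n ∈ Finset.range M, ((3/2-K)*‖a (-((2*(n+1):ℕ):ℤ))‖^2
          + 1/2*((starRingEnd ℂ) (a (-((2*n:ℕ):ℤ))) * a (-((2*(n+1):ℕ):ℤ))).re)
        = ∑ n ∈ Finset.range M, ((3/2-K)*v (2*n+2) + 1/2*q (2*n+2)) := by
      apply Finset.sum_congr rfl; intro n _
      rw [reCM_comm]
      simp only [hv_def, hq_def]; push_cast; ring_nf
    rw [e, Finset.sum_add_distrib, ← Finset.mul_sum, ← Finset.mul_sum] at hch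
    have e0 : ‖a (-((2*0:ℕ):ℤ))‖^2 = v 0 := rfl
    have eM : ‖a (-((2*M:ℕ):ℤ))‖^2 = v (2*M) := rfl
    rw [e0, eM] at hch
    exact hch
  have hcOR : 1/4*u 1 ≤ 1/4*u (2*M+1)
      + ((3/2-K) * ∑ k ∈ Finset.range M, u (2*k+1) + 1/2 * ∑ k ∈ Finset.range M, p (2*k+1)) := by
    have hch := oddchain (fun n => a ((2*n+1 : ℕ):ℤ)) M
    have e : ∑ n ∈ Finset.range M, ((3/2-K)*‖a ((2*n+1:ℕ):ℤ)‖^2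
          + 1/2*((starRingEnd ℂ) (a ((2*n+1:ℕ):ℤ)) * a ((2*(n+1)+1:ℕ):ℤ)).re)
        = ∑ n ∈ Finset.range M, ((3/2-K)*u (2*n+1) + 1/2*p (2*n+1)) := by
      apply Finset.sum_congr rfl; intro n _
      simp only [hu_def, hp_def]; push_cast; ring_nf
    rw [e, Finset.sum_add_distrib, ← Finset.mul_sum, ← Finset.mul_sum] at hch
    have e0 : ‖a ((2*0+1:ℕ):ℤ)‖^2 = u 1 := rfl
    have eM : ‖a ((2*M+1:ℕ):ℤ)‖^2 = u (2*M+1) := rfl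
    rw [e0, eM] at hch
    exact hch
  have hcOL : 1/4*v 1 ≤ 1/4*v (2*M+1)
      + ((3/2-K) * ∑ k ∈ Finset.range M, v (2*k+1) + 1/2 * ∑ k ∈ Finset.range M, q (2*k+3)) := by
    have hch := oddchain (fun n => a (-((2*n+1 : ℕ):ℤ))) M
    have e : ∑ n ∈ Finset.range M, ((3/2-K)*‖a (-((2*n+1:ℕ):ℤ))‖^2
          + 1/2*((starRingEnd ℂ) (a (-((2*n+1:ℕ):ℤ))) * a (-((2*(n+1)+1:ℕ):ℤ))).re)
        = ∑ n ∈ Finset.range M, ((3/2-K)*v (2*n+1) + 1/2*q (2*n+3)) := by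
      apply Finset.sum_congr rfl; intro n _
      rw [reCM_comm]
      simp only [hv_def, hq_def]; push_cast; ring_nf
    rw [e, Finset.sum_add_distrib, ← Finset.mul_sum, ← Finset.mul_sum] at hch
    have e0 : ‖a (-((2*0+1:ℕ):ℤ))‖^2 = v 1 := rfl
    have eM : ‖a (-((2*M+1:ℕ):ℤ))‖^2 = v (2*M+1) := rfl
    rw [e0, eM] at hch
    exact hch
  -- shift identities
  have hP2 : ∑ k ∈ Finset.range M, p (2*k+2)
      = ∑ k ∈ Finset.range M, p (2*k) + p (2*M) - p 0 := by
    have hs := shiftsum (fun k => p (2*k)) M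
    have e : ∀ k ∈ Finset.range M, p (2*(k+1)) = p (2*k+2) := fun k _ => rfl
    rw [Finset.sum_congr rfl e] at hs
    exact hs
  have hQ3 : ∑ k ∈ Finset.range M, q (2*k+3)
      = ∑ k ∈ Finset.range M, q (2*k+1) + q (2*M+1) - q 1 := by
    have hs := shiftsum (fun k => q (2*k+1)) M
    have e : ∀ k ∈ Finset.range M, q (2*(k+1)+1) = q (2*k+3) := fun k _ => rfl
    rw [Finset.sum_congr rfl e] at hs
    exact hs
  -- norm expansion
  have hq1 : ((starRingEnd ℂ) (a 1) * a (-1)).re = q 1 := by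
    rw [reCM_comm]; simp only [hq_def]; norm_num
  have hnorm : ‖a 1 + a (-1)‖^2 = u 1 + v 1 + 2 * q 1 := by
    rw [normaddsq, hq1]
    have e1 : ‖a 1‖^2 = u 1 := by simp only [hu_def]; norm_num
    have e2 : ‖a (-1)‖^2 = v 1 := by simp only [hv_def]; norm_num
    rw [e1, e2]
  -- zero endpoints
  have hz1 : u (2*M) = 0 := hu0 _ (by omega)
  have hz2 : v (2*M) = 0 := hv0 _ (by omega)
  have hz3 : u (2*M+1) = 0 := hu0 _ (by omega)
  have hz4 : v (2*M+1) = 0 := hv0 _ (by omega)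
  have hz5 : p (2*M) = 0 := hp0 _ (by omega)
  have hz6 : q (2*M+1) = 0 := hq0 _ (by omega)
  have hvu : v 0 = u 0 := by simp only [hu_def, hv_def]; norm_num
  -- assemble
  rw [hS, hRR, hminus, hCr, hext1, hext2, hsplit1, hsplit2, hnorm]
  rw [hvu] at hcL
  rw [hz1] at hcR
  rw [hz2] at hcL
  rw [hz3] at hcOR
  rw [hz4] at hcOL
  rw [hz5] at hP2
  rw [hz6] at hQ3
  linarith [hcR, hcL, hcOR, hcOL, hP2, hQ3]
end LMC

open ContinuousLinearMap
open scoped InnerProductSpace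

/-- on `ℓ²(ℤ)` with orthonormal basis `(φ_j)`, with `R φ_j = (1 − δ_{j0}) φ_j`
and `T` self-adjoint with the given matrix entries, one has `R + T ≥ κ I` with
`κ = (3 − √5)/2`. -/
theorem lorentz_mode_coercivity
    {H : Type*} [NormedAddCommGroup H] [InnerProductSpace ℂ H] [CompleteSpace H]
    (φ : HilbertBasis ℤ ℂ H) (R T : H →L[ℂ] H)
    (hT : IsSelfAdjoint T)
    (hR : ∀ j : ℤ, R (φ j) = if j = 0 then 0 else φ j)
    (hTent : ∀ j k : ℤ, ⟪T (φ j), φ k⟫_ℂ =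
        (1 / 2 : ℂ) * (if j = k then 1 else 0)
        + (1 / 4 : ℂ) * ((if j - k = 2 then 1 else 0) + (if j - k = -2 then 1 else 0))
        - (1 / 4 : ℂ) * ((if j = 1 then 1 else 0) + (if j = -1 then 1 else 0))
            * ((if k = 1 then 1 else 0) + (if k = -1 then 1 else 0))) :
    ∀ x : H, ((3 - Real.sqrt 5) / 2) * ‖x‖ ^ 2 ≤ (⟪(R + T) x, x⟫_ℂ).re := by
  classical
  have hon := φ.orthonormal
  have key : ∀ x ∈ Submodule.span ℂ (Set.range (φ : ℤ → H)),
      ((3 - Real.sqrt 5) / 2) * ‖x‖ ^ 2 ≤ (⟪(R + T) x, x⟫_ℂ).re := by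
    rintro x hx
    obtain ⟨c, rfl⟩ := Finsupp.mem_span_range_iff_exists_finsupp.mp hx
    set N : ℕ := 1 + c.support.sup (fun j => j.natAbs) with hN_def
    have hN : 1 ≤ N := by omega
    set F : Finset ℤ := Finset.Icc (-(N:ℤ)) (N:ℤ) with hF_def
    have hsupp : ∀ j : ℤ, j ∉ F → c j = 0 := by
      intro j hj
      by_contra hne
      have hm : j ∈ c.support := Finsupp.mem_support_iff.mpr hne
      have hle : j.natAbs ≤ c.support.sup (fun j => j.natAbs) :=
        Finset.le_sup (f := fun j : ℤ => j.natAbs) hm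
      simp only [hF_def, Finset.mem_Icc, not_and_or, not_le] at hj
      omega
    have h1F : (1:ℤ) ∈ F := by simp only [hF_def, Finset.mem_Icc]; omega
    have hm1F : (-1:ℤ) ∈ F := by simp only [hF_def, Finset.mem_Icc]; omega
    have hxe : (c.sum fun i a => a • φ i) = ∑ j ∈ F, c j • φ j := by
      apply Finsupp.sum_of_support_subset
      · intro j hj; by_contra hn; exact (Finsupp.mem_support_iff.mp hj) (hsupp j hn)
      · intros; simp
    rw [hxe]
    set y : H := ∑ j ∈ F, c j • φ j with hy
    have hco : ∀ j ∈ F, ⟪φ j, y⟫_ℂ = c j := fun j hj => by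
      rw [hy]; exact hon.inner_right_sum _ hj
    -- norm of y
    have hxx : ⟪y, y⟫_ℂ = ∑ j ∈ F, (starRingEnd ℂ) (c j) * c j := by
      nth_rewrite 1 [hy]
      rw [sum_inner]
      exact Finset.sum_congr rfl fun j hj => by rw [inner_smul_left, hco j hj]
    have hnx : ‖y‖^2 = ∑ j ∈ F, ‖c j‖^2 := by
      rw [← inner_self_eq_norm_sq (𝕜 := ℂ), hxx, RCLike.re_to_complex, Complex.re_sum]
      exact Finset.sum_congr rfl fun j _ => LMC.reSelf (c j)
    -- R part
    have hRy : ⟪R y, y⟫_ℂ = ∑ j ∈ F, (starRingEnd ℂ) (c j) * (if j = 0 then 0 else c j) := by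
      nth_rewrite 1 [hy]
      rw [map_sum, sum_inner]
      refine Finset.sum_congr rfl fun j hj => ?_
      rw [map_smul, inner_smul_left, hR j]
      by_cases hj0 : j = 0
      · rw [if_pos hj0, if_pos hj0, inner_zero_left]
      · rw [if_neg hj0, if_neg hj0, hco j hj]
    have hRyre : (⟪R y, y⟫_ℂ).re = ∑ j ∈ F, (if j = 0 then (0:ℝ) else ‖c j‖^2) := by
      rw [hRy, Complex.re_sum]
      refine Finset.sum_congr rfl fun j _ => ?_
      by_cases hj0 : j = 0
      · rw [if_pos hj0, if_pos hj0, mul_zero, Complex.zero_re]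
      · rw [if_neg hj0, if_neg hj0, LMC.reSelf]
    -- T part: coefficient computation
    have hTco : ∀ j ∈ F, ⟪T (φ j), y⟫_ℂ
        = (1/2:ℂ) * c j + ((1/4:ℂ) * c (j-2) + (1/4:ℂ) * c (j+2))
          - (1/4:ℂ) * ((if j = 1 then 1 else 0) + (if j = -1 then 1 else 0)) * (c 1 + c (-1)) := by
      intro j hj
      rw [hy, inner_sum]
      have e : ∀ k ∈ F, ⟪T (φ j), c k • φ k⟫_ℂ
          = c k * ((1/2:ℂ)*(if j = k then 1 else 0))
            + (c k * ((1/4:ℂ)*(if j - k = 2 then 1 else 0))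
              + c k * ((1/4:ℂ)*(if j - k = -2 then 1 else 0)))
            - c k * ((1/4:ℂ)*((if j = 1 then 1 else 0)+(if j = -1 then 1 else 0))
              *((if k = 1 then 1 else 0)+(if k = -1 then 1 else 0))) := by
        intro k _
        rw [inner_smul_right, hTent j k]
        ring
      rw [Finset.sum_congr rfl e, Finset.sum_sub_distrib, Finset.sum_add_distrib,
        Finset.sum_add_distrib]
      have t1 : ∑ k ∈ F, c k * ((1/2:ℂ)*(if j = k then 1 else 0)) = (1/2:ℂ) * c j := by
        have e1 : ∀ k ∈ F, c k * ((1/2:ℂ)*(if j = k then 1 else 0))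
            = (if j = k then (1/2:ℂ) * c k else 0) := by
          intro k _; by_cases h : j = k <;> simp [h] <;> ring
        rw [Finset.sum_congr rfl e1, Finset.sum_ite_eq, if_pos hj]
      have t2 : ∑ k ∈ F, c k * ((1/4:ℂ)*(if j - k = 2 then 1 else 0)) = (1/4:ℂ) * c (j-2) := by
        have e1 : ∀ k ∈ F, c k * ((1/4:ℂ)*(if j - k = 2 then 1 else 0))
            = (if j - 2 = k then (1/4:ℂ) * c k else 0) := by
          intro k _
          by_cases h : j - k = 2
          · rw [if_pos h, if_pos (by omega)]; ring
          · rw [if_neg h, if_neg (by omega)]; ring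
        rw [Finset.sum_congr rfl e1, Finset.sum_ite_eq]
        by_cases hmem : (j - 2) ∈ F
        · rw [if_pos hmem]
        · rw [if_neg hmem, hsupp _ hmem, mul_zero]
      have t3 : ∑ k ∈ F, c k * ((1/4:ℂ)*(if j - k = -2 then 1 else 0)) = (1/4:ℂ) * c (j+2) := by
        have e1 : ∀ k ∈ F, c k * ((1/4:ℂ)*(if j - k = -2 then 1 else 0))
            = (if j + 2 = k then (1/4:ℂ) * c k else 0) := by
          intro k _
          by_cases h : j - k = -2
          · rw [if_pos h, if_pos (by omega)]; ring
          · rw [if_neg h, if_neg (by omega)]; ring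
        rw [Finset.sum_congr rfl e1, Finset.sum_ite_eq]
        by_cases hmem : (j + 2) ∈ F
        · rw [if_pos hmem]
        · rw [if_neg hmem, hsupp _ hmem, mul_zero]
      have t4 : ∑ k ∈ F, c k * ((1/4:ℂ)*((if j = 1 then 1 else 0)+(if j = -1 then 1 else 0))
            *((if k = 1 then 1 else 0)+(if k = -1 then 1 else 0)))
          = (1/4:ℂ) * ((if j = 1 then 1 else 0)+(if j = -1 then 1 else 0)) * (c 1 + c (-1)) := by
        have e1 : ∀ k ∈ F, c k * ((1/4:ℂ)*((if j = 1 then 1 else 0)+(if j = -1 then 1 else 0))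
              *((if k = 1 then 1 else 0)+(if k = -1 then 1 else 0)))
            = (if k = 1 then (1/4:ℂ)*((if j = 1 then 1 else 0)+(if j = -1 then 1 else 0)) * c k else 0)
              + (if k = -1 then (1/4:ℂ)*((if j = 1 then 1 else 0)+(if j = -1 then 1 else 0)) * c k else 0) := by
          intro k _
          by_cases h1 : k = 1
          · subst h1; norm_num; try ring
          · by_cases h2 : k = -1
            · subst h2; norm_num; try ring
            · simp only [if_neg h1, if_neg h2]; ring
        rw [Finset.sum_congr rfl e1, Finset.sum_add_distrib, Finset.sum_ite_eq',
          Finset.sum_ite_eq', if_pos h1F, if_pos hm1F]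
        ring
      rw [t1, t2, t3, t4]
    -- T part: full inner product
    have hTy : ⟪T y, y⟫_ℂ
        = (∑ j ∈ F, (starRingEnd ℂ) (c j)
            * ((1/2:ℂ) * c j + ((1/4:ℂ) * c (j-2) + (1/4:ℂ) * c (j+2))))
          - (1/4:ℂ) * ((starRingEnd ℂ) (c 1 + c (-1))) * (c 1 + c (-1)) := by
      nth_rewrite 1 [hy]
      rw [map_sum, sum_inner]
      have e : ∀ j ∈ F, ⟪T (c j • φ j), y⟫_ℂ
          = (starRingEnd ℂ) (c j) * ((1/2:ℂ) * c j + ((1/4:ℂ) * c (j-2) + (1/4:ℂ) * c (j+2)))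
            - (starRingEnd ℂ) (c j) * ((1/4:ℂ) * ((if j = 1 then 1 else 0)+(if j = -1 then 1 else 0)) * (c 1 + c (-1))) := by
        intro j hj
        rw [map_smul, inner_smul_left, hTco j hj]
        ring
      rw [Finset.sum_congr rfl e, Finset.sum_sub_distrib]
      congr 1
      have e1 : ∀ j ∈ F, (starRingEnd ℂ) (c j)
            * ((1/4:ℂ) * ((if j = 1 then 1 else 0)+(if j = -1 then 1 else 0)) * (c 1 + c (-1)))
          = (if j = 1 then (1/4:ℂ) * (c 1 + c (-1)) * (starRingEnd ℂ) (c j) else 0)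
            + (if j = -1 then (1/4:ℂ) * (c 1 + c (-1)) * (starRingEnd ℂ) (c j) else 0) := by
        intro j _
        by_cases h1 : j = 1
        · subst h1; norm_num; try ring
        · by_cases h2 : j = -1
          · subst h2; norm_num; try ring
          · simp only [if_neg h1, if_neg h2]; ring
      rw [Finset.sum_congr rfl e1, Finset.sum_add_distrib, Finset.sum_ite_eq',
        Finset.sum_ite_eq', if_pos h1F, if_pos hm1F, map_add]
      ring
    have hTyre : (⟪T y, y⟫_ℂ).re
        = (∑ j ∈ F, ((1/2) * ‖c j‖^2
            + ((1/4) * ((starRingEnd ℂ) (c j) * c (j-2)).re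
              + (1/4) * ((starRingEnd ℂ) (c j) * c (j+2)).re)))
          - (1/4) * ‖c 1 + c (-1)‖^2 := by
      rw [hTy, Complex.sub_re, Complex.re_sum]
      congr 1
      · refine Finset.sum_congr rfl fun j _ => ?_
        have e : (starRingEnd ℂ) (c j) * ((1/2:ℂ) * c j + ((1/4:ℂ) * c (j-2) + (1/4:ℂ) * c (j+2)))
            = ((1/2:ℝ):ℂ) * ((starRingEnd ℂ) (c j) * c j)
              + (((1/4:ℝ):ℂ) * ((starRingEnd ℂ) (c j) * c (j-2))
                + ((1/4:ℝ):ℂ) * ((starRingEnd ℂ) (c j) * c (j+2))) := by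
          push_cast; ring
        rw [e, Complex.add_re, Complex.add_re, Complex.re_ofReal_mul, Complex.re_ofReal_mul,
          Complex.re_ofReal_mul, LMC.reSelf]
      · have e : (1/4:ℂ) * ((starRingEnd ℂ) (c 1 + c (-1))) * (c 1 + c (-1))
            = ((1/4:ℝ):ℂ) * ((starRingEnd ℂ) (c 1 + c (-1)) * (c 1 + c (-1))) := by
          push_cast; ring
        rw [e, Complex.re_ofReal_mul, LMC.reSelf]
    -- assemble
    have hsum : ∑ j ∈ F, ((1/2) * ‖c j‖^2
            + ((1/4) * ((starRingEnd ℂ) (c j) * c (j-2)).re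
              + (1/4) * ((starRingEnd ℂ) (c j) * c (j+2)).re))
        = (1/2) * ∑ j ∈ F, ‖c j‖^2
          + (1/4) * ∑ j ∈ F, ((starRingEnd ℂ) (c j) * c (j-2)).re
          + (1/4) * ∑ j ∈ F, ((starRingEnd ℂ) (c j) * c (j+2)).re := by
      rw [Finset.sum_add_distrib, Finset.sum_add_distrib, Finset.mul_sum, Finset.mul_sum,
        Finset.mul_sum]
      ring
    have hfin : (⟪(R + T) y, y⟫_ℂ).re
        = (∑ j ∈ F, if j = 0 then (0:ℝ) else ‖c j‖^2)
          + ((1/2) * ∑ j ∈ F, ‖c j‖^2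
            + (1/4) * ∑ j ∈ F, ((starRingEnd ℂ) (c j) * c (j-2)).re
            + (1/4) * ∑ j ∈ F, ((starRingEnd ℂ) (c j) * c (j+2)).re
            - (1/4) * ‖c 1 + c (-1)‖^2) := by
      rw [ContinuousLinearMap.add_apply, inner_add_left, Complex.add_re, hRyre, hTyre, hsum]
      try ring
    rw [hfin, hnx]
    have hcore := LMC.core (fun j => c j) N hN (by simpa only [← hF_def] using hsupp)
    rw [← hF_def] at hcore
    rw [show ((3 - Real.sqrt 5)/2 : ℝ) = LMC.K from rfl]
    exact hcore
  -- density argument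
  intro x
  have hdense : Dense ((Submodule.span ℂ (Set.range (φ : ℤ → H)) : Submodule ℂ H) : Set H) := by
    rw [Submodule.dense_iff_topologicalClosure_eq_top]
    exact φ.dense_span
  have hcl : IsClosed {z : H | ((3 - Real.sqrt 5)/2) * ‖z‖^2 ≤ (⟪(R + T) z, z⟫_ℂ).re} := by
    apply isClosed_le
    · exact (continuous_const.mul ((continuous_norm).pow 2))
    · exact Complex.continuous_re.comp (((R + T).continuous).inner continuous_id)
  have hsub : ((Submodule.span ℂ (Set.range (φ : ℤ → H)) : Submodule ℂ H) : Set H)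
      ⊆ {z : H | ((3 - Real.sqrt 5)/2) * ‖z‖^2 ≤ (⟪(R + T) z, z⟫_ℂ).re} :=
    fun z hz => key z hz
  have := closure_minimal hsub hcl
  exact this (by rw [hdense.closure_eq]; exact Set.mem_univ x)
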